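/- Let d ≥ 2 and n ≥ 2 be integers. Let g(x) = Σ_{i=2}^{d} c_i x^i ∈ ℂ[x], and let f(x,y) = y + Σ_{2 ≤ i+j ≤ n} a_{i,j} x^i y^j ∈ ℂ[x,y]. Suppose that f(x, g(x)) = λ x^{dn} for some λ ∈ ℂ with λ ≠ 0. Then c_i = 0 for every 2 ≤ i ≤ d−1, i.e. g(x) = c_d x^d; moreover c_d ≠ 0, a_{0,n} ≠ 0, and a_{0,n} c_d^n = λ. -/
import Mathlib


/-!
**Statement 15** (the Claim in the proof of Theorem 3.5 of the paper).
Let `d ≥ 2`, `n ≥ 2`, `g(x) = Σ_{i=2}^d c_i x^i` and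
`f(x,y) = y + Σ_{2 ≤ i+j ≤ n} a_{i,j} x^i y^j`.  If `f(x,g(x)) = λ·x^{dn}` with
`λ ≠ 0`, then `c_i = 0` for `2 ≤ i ≤ d−1` (i.e. `g = c_d x^d`), `c_d ≠ 0`,
`a_{0,n} ≠ 0` and `a_{0,n}·c_d^n = λ`.
We work in `ℂ[x,y] = MvPolynomial (Fin 2) ℂ` with `x = X 0`, `y = X 1`;
the substitution `f(x, g(x))` is `aeval ![X 0, g] f`.
-/

/-- auxiliary coefficient lemma -/
lemma coeffG (d : ℕ) (c : ℕ → ℂ) (t : ℕ) :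
    (∑ i ∈ Finset.Icc 2 d, Polynomial.C (c i) * Polynomial.X ^ i).coeff t
      = if t ∈ Finset.Icc 2 d then c t else 0 := by
  rw [Polynomial.finset_sum_coeff]
  simp only [Polynomial.coeff_C_mul, Polynomial.coeff_X_pow, mul_ite, mul_one, mul_zero]
  exact Finset.sum_ite_eq (Finset.Icc 2 d) t (fun i => c i)

lemma natDegG (d : ℕ) (c : ℕ → ℂ) :
    (∑ i ∈ Finset.Icc 2 d, Polynomial.C (c i) * Polynomial.X ^ i).natDegree ≤ d := by
  rw [Polynomial.natDegree_le_iff_coeff_eq_zero]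
  intro N hN
  rw [coeffG, if_neg]
  simp only [Finset.mem_Icc]; omega

lemma powzeroG (d : ℕ) (c : ℕ → ℂ) (j k : ℕ) (h : d * j < k) :
    ((∑ i ∈ Finset.Icc 2 d, Polynomial.C (c i) * Polynomial.X ^ i) ^ j).coeff k = 0 := by
  apply Polynomial.coeff_eq_zero_of_natDegree_lt
  calc ((∑ i ∈ Finset.Icc 2 d, Polynomial.C (c i) * Polynomial.X ^ i) ^ j).natDegree
      ≤ j * (∑ i ∈ Finset.Icc 2 d, Polynomial.C (c i) * Polynomial.X ^ i).natDegree :=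
        Polynomial.natDegree_pow_le
    _ ≤ j * d := Nat.mul_le_mul le_rfl (natDegG d c)
    _ < k := by rw [Nat.mul_comm] at h; exact h

lemma topG (d n : ℕ) (c : ℕ → ℂ) (hd : 2 ≤ d) :
    ((∑ i ∈ Finset.Icc 2 d, Polynomial.C (c i) * Polynomial.X ^ i) ^ n).coeff (d * n)
      = c d ^ n := by
  rw [Nat.mul_comm, Polynomial.coeff_pow_of_natDegree_le (natDegG d c), coeffG]
  rw [if_pos]
  simp only [Finset.mem_Icc]; omega

lemma secondG (d n e : ℕ) (c : ℕ → ℂ) (hd : 2 ≤ d) (hn : 2 ≤ n)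
    (he2 : 2 ≤ e) (hed : e < d) (hz : ∀ t, e < t → t < d → c t = 0) :
    ((∑ i ∈ Finset.Icc 2 d, Polynomial.C (c i) * Polynomial.X ^ i) ^ n).coeff (d * (n-1) + e)
      = (n : ℂ) * c d ^ (n-1) * c e := by
  set H : Polynomial ℂ := ∑ i ∈ Finset.Icc 2 e, Polynomial.C (c i) * Polynomial.X ^ i with hH
  have hGH : (∑ i ∈ Finset.Icc 2 d, Polynomial.C (c i) * Polynomial.X ^ i)
      = Polynomial.C (c d) * Polynomial.X ^ d + H := by
    ext t
    rw [coeffG, Polynomial.coeff_add, Polynomial.coeff_C_mul, Polynomial.coeff_X_pow, hH, coeffG]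
    simp only [Finset.mem_Icc, mul_ite, mul_one, mul_zero]
    split_ifs with h1 h2 h3 h2 h3 <;>
      first
      | ring1
      | (exfalso; omega)
      | (rw [h2]; ring1)
      | (rw [hz t (by omega) (by omega)]; ring1)
  have hdn : d * n = d * (n - 1) + d := by
    conv_lhs => rw [show n = (n-1) + 1 by omega]
    rw [Nat.mul_succ]
  rw [hGH, add_pow, Polynomial.finset_sum_coeff]
  have hterm : ∀ k, ((Polynomial.C (c d) * Polynomial.X ^ d) ^ k * H ^ (n - k)
        * (n.choose k : Polynomial ℂ)).coeff (d * (n-1) + e)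
      = (c d ^ k * (n.choose k : ℂ)) *
        (if d * k ≤ d * (n-1) + e then (H ^ (n - k)).coeff (d * (n-1) + e - d * k) else 0) := by
    intro k
    have heq : (Polynomial.C (c d) * Polynomial.X ^ d) ^ k * H ^ (n - k)
        * (n.choose k : Polynomial ℂ)
        = Polynomial.C (c d ^ k * (n.choose k : ℂ)) * (H ^ (n - k) * Polynomial.X ^ (d * k)) := by
      rw [mul_pow, ← Polynomial.C_pow, ← pow_mul, Polynomial.C_mul, Polynomial.C_eq_natCast,
        Nat.mul_comm d k]
      ring
    rw [heq, Polynomial.coeff_C_mul, Polynomial.coeff_mul_X_pow']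
  rw [Finset.sum_congr rfl (fun k _ => hterm k)]
  rw [Finset.sum_eq_single (n-1)]
  · rw [if_pos (by omega)]
    have h1 : n - (n - 1) = 1 := by omega
    have h2 : d * (n-1) + e - d * (n-1) = e := by omega
    rw [h1, h2, pow_one, hH, coeffG, if_pos (by simp only [Finset.mem_Icc]; omega)]
    have h3 : n.choose (n-1) = n := by
      rw [← Nat.choose_symm (by omega : n - 1 ≤ n)]
      simp [Nat.sub_sub_self (by omega : 1 ≤ n)]
    rw [h3]; ring
  · intro k hk hkne
    rw [Finset.mem_range] at hk
    by_cases hkn : k = n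
    · subst hkn
      rw [if_neg (by omega), mul_zero]
    · have hk2 : k ≤ n - 2 := by omega
      have hle : d * k ≤ d * (n-1) + e :=
        le_trans (Nat.mul_le_mul le_rfl (by omega : k ≤ n - 1)) (Nat.le_add_right _ _)
      rw [if_pos hle]
      have hsplit : d * (n-1) + e - d * k = d * (n - 1 - k) + e := by
        have : d * (n-1) = d * k + d * (n - 1 - k) := by
          rw [← Nat.left_distrib]; congr 1; omega
        omega
      rw [hsplit]
      have hz2 : ((H : Polynomial ℂ) ^ (n - k)).coeff (d * (n - 1 - k) + e) = 0 := by
        apply Polynomial.coeff_eq_zero_of_natDegree_lt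
        calc (H ^ (n - k)).natDegree ≤ (n - k) * H.natDegree := Polynomial.natDegree_pow_le
          _ ≤ (n - k) * e := Nat.mul_le_mul le_rfl (natDegG e c)
          _ < d * (n - 1 - k) + e := by
              have h4 : n - k = (n - 1 - k) + 1 := by omega
              have h5 : 1 ≤ n - 1 - k := by omega
              have h6 : (n-1-k) * (e+1) ≤ (n-1-k) * d := Nat.mul_le_mul le_rfl hed
              rw [h4]
              nlinarith [h5, h6]
      rw [hz2, mul_zero]
  · intro h
    exact absurd (Finset.mem_range.mpr (by omega)) h

lemma arith1 (d n i j : ℕ) (hd : 2 ≤ d) (hn : 2 ≤ n) (hij : i + j ≤ n) (hjn : j < n) :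
    d * j + i < d * n := by
  obtain ⟨q, rfl⟩ : ∃ q, n = j + q := ⟨n - j, by omega⟩
  rw [Nat.mul_add]
  have h1 : 2 * q ≤ d * q := Nat.mul_le_mul hd le_rfl
  have h2 : 1 ≤ q := by omega
  have h3 : i ≤ q := by omega
  linarith

lemma arith2 (d n e i j : ℕ) (hd : 2 ≤ d) (hn : 2 ≤ n) (he : 2 ≤ e)
    (hij : i + j ≤ n) (hne : ¬(i = 0 ∧ j = n)) :
    d * j + i < d * (n - 1) + e := by
  rcases Nat.eq_zero_or_pos i with hi | hi
  · subst hi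
    have hj : j ≤ n - 1 := by omega
    have h1 : d * j ≤ d * (n - 1) := Nat.mul_le_mul le_rfl hj
    omega
  · have h1 : d * j + d * (n - 1 - j) = d * (n - 1) := by
      rw [← Nat.mul_add]; congr 1; omega
    have h2 : 2 * (n - 1 - j) ≤ d * (n - 1 - j) := Nat.mul_le_mul hd le_rfl
    have h3 : i ≤ (n - 1 - j) + 1 := by omega
    have key : i < d * (n - 1 - j) + e := by linarith
    calc d * j + i < d * j + (d * (n - 1 - j) + e) := Nat.add_lt_add_left key _
      _ = d * (n - 1) + e := by rw [← Nat.add_assoc, h1]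


open MvPolynomial

theorem substitution_claim (d n : ℕ) (hd : 2 ≤ d) (hn : 2 ≤ n)
    (c : ℕ → ℂ) (a : ℕ → ℕ → ℂ) (lam : ℂ) (hlam : lam ≠ 0)
    (g f : MvPolynomial (Fin 2) ℂ)
    (hg : g = ∑ i ∈ Finset.Icc 2 d, MvPolynomial.C (c i) * X 0 ^ i)
    (hf : f = X 1 + ∑ p ∈ (Finset.range (n + 1) ×ˢ Finset.range (n + 1)).filter
        (fun p => 2 ≤ p.1 + p.2 ∧ p.1 + p.2 ≤ n),
        MvPolynomial.C (a p.1 p.2) * X 0 ^ p.1 * X 1 ^ p.2)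
    (hsub : MvPolynomial.aeval ![X 0, g] f = MvPolynomial.C lam * X 0 ^ (d * n)) :
    (∀ i, 2 ≤ i → i ≤ d - 1 → c i = 0) ∧
    g = MvPolynomial.C (c d) * X 0 ^ d ∧
    c d ≠ 0 ∧ a 0 n ≠ 0 ∧ a 0 n * c d ^ n = lam := by
  set S := (Finset.range (n + 1) ×ˢ Finset.range (n + 1)).filter
      (fun p => 2 ≤ p.1 + p.2 ∧ p.1 + p.2 ≤ n) with hS
  set Gp : Polynomial ℂ := ∑ i ∈ Finset.Icc 2 d, Polynomial.C (c i) * Polynomial.X ^ i with hGp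
  -- transfer to single-variable polynomials
  have key : Gp + ∑ p ∈ S, Polynomial.C (a p.1 p.2) * Polynomial.X ^ p.1 * Gp ^ p.2
      = Polynomial.C lam * Polynomial.X ^ (d * n) := by
    have h2 := congrArg (MvPolynomial.aeval ![Polynomial.X, Polynomial.X] :
        MvPolynomial (Fin 2) ℂ →ₐ[ℂ] Polynomial ℂ) hsub
    rw [hf, hg] at h2
    rw [hS, hGp]
    simpa [map_add, map_sum, map_mul, map_pow, MvPolynomial.aeval_X,
      MvPolynomial.algebraMap_eq, Polynomial.algebraMap_eq] using h2
  have hterm : ∀ (A : ℂ) (i j m : ℕ),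
      (Polynomial.C A * Polynomial.X ^ i * Gp ^ j).coeff m
        = A * (if i ≤ m then (Gp ^ j).coeff (m - i) else 0) := by
    intro A i j m
    have hcomm : Polynomial.C A * Polynomial.X ^ i * Gp ^ j
        = Polynomial.C A * (Gp ^ j * Polynomial.X ^ i) := by ring1
    rw [hcomm, Polynomial.coeff_C_mul, Polynomial.coeff_mul_X_pow']
  have keyCoeff : ∀ m, Gp.coeff m
      + ∑ p ∈ S, a p.1 p.2 * (if p.1 ≤ m then (Gp ^ p.2).coeff (m - p.1) else 0)
      = lam * (if m = d * n then 1 else 0) := by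
    intro m
    have h := congrArg (fun q : Polynomial ℂ => q.coeff m) key
    simp only [Polynomial.coeff_add, Polynomial.finset_sum_coeff, Polynomial.coeff_C_mul,
      Polynomial.coeff_X_pow] at h
    rw [Finset.sum_congr rfl (fun p _ => hterm (a p.1 p.2) p.1 p.2 m)] at h
    exact h
  -- membership of (0, n) in S
  have h0n : ((0, n) : ℕ × ℕ) ∈ S := by
    rw [hS]
    simp only [Finset.mem_filter, Finset.mem_product, Finset.mem_range]
    omega
  -- Step A : coefficient at d*n
  have keyA := keyCoeff (d * n)
  rw [Finset.sum_eq_single (0, n)] at keyA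
  rotate_left
  · intro p hp hne
    rw [hS, Finset.mem_filter, Finset.mem_product, Finset.mem_range, Finset.mem_range] at hp
    split_ifs with hle
    · have hlt : d * p.2 + p.1 < d * n := by
        apply arith1 d n p.1 p.2 hd hn hp.2.2
        have : ¬(p.1 = 0 ∧ p.2 = n) := fun h => hne (Prod.ext h.1 h.2)
        omega
      have hlt2 : d * p.2 < d * n - p.1 := by
        revert hlt hle; generalize d * p.2 = A; generalize d * n = B; intro h1 h2; omega
      rw [hGp, powzeroG d c p.2 _ hlt2, mul_zero]
    · rw [mul_zero]
  · intro h; exact absurd h0n h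
  -- simplify keyA
  have hGtop : Gp.coeff (d * n) = 0 := by
    rw [hGp, coeffG, if_neg]
    have h2d : d * 2 ≤ d * n := Nat.mul_le_mul le_rfl hn
    simp only [Finset.mem_Icc]
    omega
  rw [hGtop, if_pos (Nat.zero_le _), Nat.sub_zero, if_pos rfl, mul_one, zero_add] at keyA
  rw [hGp, topG d n c hd] at keyA
  -- keyA : a 0 n * c d ^ n = lam
  have hcd : c d ≠ 0 := by
    intro h
    apply hlam
    rw [← keyA, h, zero_pow (by omega : n ≠ 0), mul_zero]
  have han : a 0 n ≠ 0 := by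
    intro h
    apply hlam
    rw [← keyA, h, zero_mul]
  -- Step B : lower coefficients vanish
  have hczero : ∀ t, 2 ≤ t → t < d → c t = 0 := by
    by_contra hcon
    push_neg at hcon
    obtain ⟨t0, ht0a, ht0b, ht0c⟩ := hcon
    set T := (Finset.Ico 2 d).filter (fun t => c t ≠ 0) with hT
    have hTne : T.Nonempty := ⟨t0, by
      rw [hT, Finset.mem_filter, Finset.mem_Ico]
      exact ⟨⟨ht0a, ht0b⟩, ht0c⟩⟩
    set e := T.max' hTne with he
    have heT : e ∈ T := T.max'_mem hTne
    rw [hT, Finset.mem_filter, Finset.mem_Ico] at heT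
    obtain ⟨⟨he2, hed⟩, hce⟩ := heT
    have hmax : ∀ t, e < t → t < d → c t = 0 := by
      intro t h1t h2t
      by_contra hct
      have htT : t ∈ T := by
        rw [hT, Finset.mem_filter, Finset.mem_Ico]
        exact ⟨⟨by omega, h2t⟩, hct⟩
      have := T.le_max' t htT
      omega
    have keyB := keyCoeff (d * (n - 1) + e)
    rw [Finset.sum_eq_single (0, n)] at keyB
    rotate_left
    · intro p hp hne
      rw [hS, Finset.mem_filter, Finset.mem_product, Finset.mem_range, Finset.mem_range] at hp
      split_ifs with hle
      · have hlt : d * p.2 + p.1 < d * (n - 1) + e := by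
          apply arith2 d n e p.1 p.2 hd hn he2 hp.2.2
          exact fun h => hne (Prod.ext h.1 h.2)
        have hlt2 : d * p.2 < d * (n - 1) + e - p.1 := by
          revert hlt hle; generalize d * p.2 = A; generalize d * (n - 1) = B
          intro h1 h2; omega
        rw [hGp, powzeroG d c p.2 _ hlt2, mul_zero]
      · rw [mul_zero]
    · intro h; exact absurd h0n h
    have hGB : Gp.coeff (d * (n - 1) + e) = 0 := by
      rw [hGp, coeffG, if_neg]
      have h1d : d * 1 ≤ d * (n - 1) := Nat.mul_le_mul le_rfl (by omega)
      simp only [Finset.mem_Icc]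
      omega
    have hne : d * (n - 1) + e ≠ d * n := by
      have hdn : d * n = d * (n - 1) + d := by
        conv_lhs => rw [show n = (n - 1) + 1 by omega]
        rw [Nat.mul_succ]
      omega
    rw [hGB, if_pos (Nat.zero_le _), Nat.sub_zero, if_neg hne, mul_zero, zero_add] at keyB
    rw [hGp, secondG d n e c hd hn he2 hed hmax] at keyB
    -- keyB : a 0 n * (n * c d ^ (n-1) * c e) = 0
    have hn0 : (n : ℂ) ≠ 0 := Nat.cast_ne_zero.mpr (by omega)
    have hcd1 : c d ^ (n - 1) ≠ 0 := pow_ne_zero _ hcd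
    have hprod : (n : ℂ) * c d ^ (n - 1) * c e = 0 := by
      rcases mul_eq_zero.mp keyB with h | h
      · exact absurd h han
      · exact h
    have : c e = 0 := by
      rcases mul_eq_zero.mp hprod with h | h
      · rcases mul_eq_zero.mp h with h' | h'
        · exact absurd h' hn0
        · exact absurd h' hcd1
      · exact h
    exact hce this
  refine ⟨fun i h1 h2 => hczero i h1 (by omega), ?_, hcd, han, keyA⟩
  rw [hg, Finset.sum_eq_single d]
  · intro i hi hine
    rw [Finset.mem_Icc] at hi
    rw [hczero i hi.1 (by omega), map_zero, zero_mul]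
  · intro h
    exact absurd (Finset.mem_Icc.mpr ⟨hd, le_rfl⟩) h
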